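/- In the blow-up chart with coordinates (x,v), for a formal vector field X of order ≥ 2 acting on C[[x,y]] via y = xv: the second component of the lifted diffeomorphism satisfies exp X(y)/exp X(x) = exp X̃(v), i.e., (exp X(x) · exp X̃(v)) = exp X(xv), as identities of formal Laurent/power series, where X̃ is the pullback of X. -/

import Mathlib

open Finsupp

noncomputable section

abbrev F2 : Type := MvPowerSeries (Fin 2) ℂ

/-- total degree of a monomial exponent -/
def deg (d : Fin 2 →₀ ℕ) : ℕ := d 0 + d 1

/-- the exponent (m, n) -/
def idx (m n : ℕ) : Fin 2 →₀ ℕ := Finsupp.single 0 m + Finsupp.single 1 n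

/-- partial derivative of a formal power series -/
def pd (i : Fin 2) (f : F2) : F2 :=
  fun d => ((d i : ℂ) + 1) * MvPowerSeries.coeff (d + Finsupp.single i 1) f

/-- the derivation a ∂/∂x + b ∂/∂y applied to g -/
def vf (a b g : F2) : F2 := a * pd 0 g + b * pd 1 g

/-- `ordGE f k` : the order ν(f) is at least k -/
def ordGE (f : F2) (k : ℕ) : Prop :=
  ∀ d : Fin 2 →₀ ℕ, deg d < k → MvPowerSeries.coeff d f = 0

/-- exp X (g) = Σ_j (1/j!) X^j(g), coefficientwise -/
def expX (a b g : F2) : F2 :=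
  fun d => ∑' j : ℕ, ((j.factorial : ℂ))⁻¹ * MvPowerSeries.coeff d ((vf a b)^[j] g)

/-- degree-k homogeneous part -/
def HT (k : ℕ) (f : F2) : F2 :=
  fun d => if deg d = k then MvPowerSeries.coeff d f else 0

/-- substitution y := x·v :  f(x, xv), in coordinates (x, v) -/
def blowup (f : F2) : F2 :=
  fun d => if d 1 ≤ d 0 then MvPowerSeries.coeff (idx (d 0 - d 1) (d 1)) f else 0

/-- `dehom k f` = f_k(1, v), where f_k is the degree-k homogeneous part of f -/
def dehom (k : ℕ) (f : F2) : F2 :=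
  fun d => if d 0 = 0 ∧ d 1 ≤ k then MvPowerSeries.coeff (idx (k - d 1) (d 1)) f else 0

/-- evaluation of the degree-k homogeneous part of f at (1, v0) -/
def evk (k : ℕ) (v0 : ℂ) (f : F2) : ℂ :=
  ∑ n ∈ Finset.range (k+1), MvPowerSeries.coeff (idx (k-n) n) f * v0 ^ n

/-- the linear change of coordinates f(x, y) ↦ f(x, y + v0·x) -/
def shear (v0 : ℂ) (f : F2) : F2 :=
  fun d => ∑ j ∈ Finset.range (deg d + 1),
    if d 1 ≤ j ∧ j - d 1 ≤ d 0 then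
      (j.choose (d 1) : ℂ) * v0 ^ (j - d 1) *
        MvPowerSeries.coeff (idx (d 0 - (j - d 1)) j) f
    else 0

/-- the coordinate x -/
def Xv : F2 := MvPowerSeries.X 0
/-- the coordinate y (alias v in the blow-up chart) -/
def Yv : F2 := MvPowerSeries.X 1

end

noncomputable section

noncomputable section

section Lemmas
open MvPowerSeries

lemma coeffA (f : F2) (d : Fin 2 →₀ ℕ) : MvPowerSeries.coeff d f = f d := rfl

@[simp] lemma idx_apply0 (a b : ℕ) : idx a b 0 = a := by simp [idx]
@[simp] lemma idx_apply1 (a b : ℕ) : idx a b 1 = b := by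
  simp [idx, Finsupp.single_apply]

lemma eq_idx (d : Fin 2 →₀ ℕ) : d = idx (d 0) (d 1) := by
  ext i
  fin_cases i <;> simp

lemma idx_eq_iff {a b c e : ℕ} : idx a b = idx c e ↔ a = c ∧ b = e := by
  constructor
  · intro h
    constructor
    · have := DFunLike.congr_fun h 0; simpa using this
    · have := DFunLike.congr_fun h 1; simpa using this
  · rintro ⟨rfl, rfl⟩; rfl

lemma idx_add (a b c e : ℕ) : idx a b + idx c e = idx (a+c) (b+e) := by
  ext i; fin_cases i <;> simp

lemma single0_eq_idx (a : ℕ) : Finsupp.single (0 : Fin 2) a = idx a 0 := by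
  simp [idx]
lemma single1_eq_idx (a : ℕ) : Finsupp.single (1 : Fin 2) a = idx 0 a := by
  simp [idx]

@[simp] lemma deg_idx (a b : ℕ) : deg (idx a b) = a + b := by simp [deg]

lemma deg_add (p q : Fin 2 →₀ ℕ) : deg (p + q) = deg p + deg q := by
  simp [deg]; ring

-- pd basics
lemma pd_apply (i : Fin 2) (f : F2) (d : Fin 2 →₀ ℕ) :
    pd i f d = ((d i : ℂ) + 1) * f (d + Finsupp.single i 1) := rfl

lemma pd_add (i : Fin 2) (f g : F2) : pd i (f + g) = pd i f + pd i g := by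
  apply MvPowerSeries.ext; intro d
  simp only [coeffA, pd_apply]
  show _ = pd i f d + pd i g d
  simp only [pd_apply]
  have : (f + g) (d + Finsupp.single i 1) = f (d + Finsupp.single i 1) + g (d + Finsupp.single i 1) := rfl
  rw [this]; ring

lemma pd_nsmul (i : Fin 2) (n : ℕ) (f : F2) : pd i (n • f) = n • pd i f := by
  apply MvPowerSeries.ext; intro d
  simp only [coeffA, pd_apply]
  show _ = n • pd i f d
  have h1 : (n • f) (d + Finsupp.single i 1) = n • f (d + Finsupp.single i 1) := rfl
  rw [h1, pd_apply]
  simp only [nsmul_eq_mul]; ring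

-- ordGE basics
lemma ordGE_mono {f : F2} {k l : ℕ} (h : ordGE f k) (hlk : l ≤ k) : ordGE f l :=
  fun d hd => h d (lt_of_lt_of_le hd hlk)

lemma ordGE_zero (f : F2) : ordGE f 0 := fun _ hd => absurd hd (Nat.not_lt_zero _)

lemma ordGE_add {f g : F2} {k : ℕ} (hf : ordGE f k) (hg : ordGE g k) : ordGE (f + g) k := by
  intro d hd
  rw [map_add, hf d hd, hg d hd, add_zero]

lemma ordGE_mul {f g : F2} {k l : ℕ} (hf : ordGE f k) (hg : ordGE g l) :
    ordGE (f * g) (k + l) := by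
  intro d hd
  classical
  rw [MvPowerSeries.coeff_mul]
  apply Finset.sum_eq_zero
  rintro ⟨p, q⟩ hp
  rw [Finset.HasAntidiagonal.mem_antidiagonal] at hp
  have hdeg : deg p + deg q = deg d := by rw [← deg_add, hp]
  rcases lt_or_ge (deg p) k with h | h
  · rw [hf p h, zero_mul]
  · rw [hg q (by omega), mul_zero]

lemma ordGE_pd {f : F2} {k : ℕ} (i : Fin 2) (hf : ordGE f k) : ordGE (pd i f) (k - 1) := by
  intro d hd
  rw [coeffA, pd_apply]
  have : deg (d + Finsupp.single i 1) = deg d + 1 := by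
    rw [deg_add]; simp [deg, Finsupp.single_apply]; fin_cases i <;> simp
  have h2 := hf (d + Finsupp.single i 1) (by omega)
  rw [coeffA] at h2
  rw [h2, mul_zero]

lemma ordGE_vf {a b f : F2} {k : ℕ} (ha : ordGE a 2) (hb : ordGE b 2) (hf : ordGE f k) :
    ordGE (vf a b f) (k + 1) := by
  have h0 : ordGE (a * pd 0 f) (2 + (k - 1)) := ordGE_mul ha (ordGE_pd 0 hf)
  have h1 : ordGE (b * pd 1 f) (2 + (k - 1)) := ordGE_mul hb (ordGE_pd 1 hf)
  exact ordGE_add (ordGE_mono h0 (by omega)) (ordGE_mono h1 (by omega))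

lemma ordGE_iter {a b : F2} (ha : ordGE a 2) (hb : ordGE b 2) (g : F2) (j : ℕ) :
    ordGE ((vf a b)^[j] g) j := by
  induction j with
  | zero => exact ordGE_zero g
  | succ n ih =>
      rw [Function.iterate_succ_apply']
      exact ordGE_vf ha hb ih

end Lemmas

section Leibniz
open MvPowerSeries Finset

lemma coeff_pd (i : Fin 2) (f : F2) (d : Fin 2 →₀ ℕ) :
    MvPowerSeries.coeff d (pd i f)
      = ((d i : ℂ) + 1) * MvPowerSeries.coeff (d + Finsupp.single i 1) f := rfl

lemma sum_antidiag_swap (n : Fin 2 →₀ ℕ) (h : (Fin 2 →₀ ℕ) × (Fin 2 →₀ ℕ) → ℂ) :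
    ∑ p ∈ Finset.HasAntidiagonal.antidiagonal n, h p = ∑ p ∈ Finset.HasAntidiagonal.antidiagonal n, h p.swap := by
  classical
  rw [← Finset.HasAntidiagonal.map_swap_antidiagonal, Finset.sum_map]
  simp

lemma key_reindex1 (i : Fin 2) (d : Fin 2 →₀ ℕ) (F G : (Fin 2 →₀ ℕ) → ℂ) :
    ∑ p ∈ Finset.HasAntidiagonal.antidiagonal (d + Finsupp.single i 1), ((p.1 : Fin 2 →₀ ℕ) i : ℂ) * (F p.1 * G p.2)
      = ∑ p ∈ Finset.HasAntidiagonal.antidiagonal d,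
          (((p.1 : Fin 2 →₀ ℕ)) i + 1 : ℂ) * (F (p.1 + Finsupp.single i 1) * G p.2) := by
  classical
  set e : Fin 2 →₀ ℕ := Finsupp.single i 1 with he
  have hfilter : ∑ p ∈ Finset.HasAntidiagonal.antidiagonal (d + e), ((p.1 : Fin 2 →₀ ℕ) i : ℂ) * (F p.1 * G p.2)
      = ∑ p ∈ (Finset.HasAntidiagonal.antidiagonal (d + e)).filter (fun p => 1 ≤ (p.1 : Fin 2 →₀ ℕ) i),
          ((p.1 : Fin 2 →₀ ℕ) i : ℂ) * (F p.1 * G p.2) := by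
    refine (Finset.sum_filter_of_ne ?_).symm
    intro p _ hp
    by_contra h
    push_neg at h
    interval_cases h1 : (p.1 i)
    · simp at hp
  rw [hfilter]
  refine (Finset.sum_nbij' (fun p => ((p.1 : Fin 2 →₀ ℕ) + e, (p.2 : Fin 2 →₀ ℕ)))
    (fun q => ((q.1 : Fin 2 →₀ ℕ) - e, (q.2 : Fin 2 →₀ ℕ))) ?_ ?_ ?_ ?_ ?_).symm
  · rintro ⟨p1, p2⟩ hp
    simp only [Finset.HasAntidiagonal.mem_antidiagonal] at hp
    simp only [Finset.mem_filter, Finset.HasAntidiagonal.mem_antidiagonal]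
    constructor
    · rw [← hp]; exact add_right_comm p1 e p2
    · simp [he]
  · rintro ⟨q1, q2⟩ hq
    simp only [Finset.mem_filter, Finset.HasAntidiagonal.mem_antidiagonal] at hq
    obtain ⟨hsum, hpos⟩ := hq
    have hle : e ≤ q1 := by rw [he]; exact Finsupp.single_le_iff.mpr hpos
    simp only [Finset.HasAntidiagonal.mem_antidiagonal]
    have h1 : q1 - e + e + q2 = d + e := by rw [tsub_add_cancel_of_le hle]; exact hsum
    have h2 : q1 - e + q2 + e = d + e := by rw [← h1]; exact add_right_comm (q1-e) q2 e
    exact add_right_cancel h2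
  · rintro ⟨p1, p2⟩ _
    simp
  · rintro ⟨q1, q2⟩ hq
    simp only [Finset.mem_filter, Finset.HasAntidiagonal.mem_antidiagonal] at hq
    have hle : e ≤ q1 := by rw [he]; exact Finsupp.single_le_iff.mpr hq.2
    simp [tsub_add_cancel_of_le hle]
  · rintro ⟨p1, p2⟩ _
    simp only
    have h0 : (p1 + e) i = p1 i + 1 := by simp [he]
    rw [h0]
    push_cast
    ring

lemma key_reindex2 (i : Fin 2) (d : Fin 2 →₀ ℕ) (F G : (Fin 2 →₀ ℕ) → ℂ) :
    ∑ p ∈ Finset.HasAntidiagonal.antidiagonal (d + Finsupp.single i 1), ((p.2 : Fin 2 →₀ ℕ) i : ℂ) * (F p.1 * G p.2)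
      = ∑ p ∈ Finset.HasAntidiagonal.antidiagonal d,
          (((p.2 : Fin 2 →₀ ℕ)) i + 1 : ℂ) * (F p.1 * G (p.2 + Finsupp.single i 1)) := by
  classical
  rw [sum_antidiag_swap (d + Finsupp.single i 1)
    (fun p => ((p.2 : Fin 2 →₀ ℕ) i : ℂ) * (F p.1 * G p.2))]
  rw [sum_antidiag_swap d
    (fun p => (((p.2 : Fin 2 →₀ ℕ)) i + 1 : ℂ) * (F p.1 * G (p.2 + Finsupp.single i 1)))]
  simp only [Prod.fst_swap, Prod.snd_swap]
  calc ∑ p ∈ Finset.HasAntidiagonal.antidiagonal (d + Finsupp.single i 1),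
          ((p.1 : Fin 2 →₀ ℕ) i : ℂ) * (F p.2 * G p.1)
      = ∑ p ∈ Finset.HasAntidiagonal.antidiagonal (d + Finsupp.single i 1),
          ((p.1 : Fin 2 →₀ ℕ) i : ℂ) * (G p.1 * F p.2) :=
        Finset.sum_congr rfl fun p _ => by ring
    _ = ∑ p ∈ Finset.HasAntidiagonal.antidiagonal d,
          (((p.1 : Fin 2 →₀ ℕ)) i + 1 : ℂ) * (G (p.1 + Finsupp.single i 1) * F p.2) :=
        key_reindex1 i d G F
    _ = ∑ p ∈ Finset.HasAntidiagonal.antidiagonal d,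
          (((p.1 : Fin 2 →₀ ℕ)) i + 1 : ℂ) * (F p.2 * G (p.1 + Finsupp.single i 1)) :=
        Finset.sum_congr rfl fun p _ => by ring

lemma pd_mul (i : Fin 2) (f g : F2) : pd i (f * g) = pd i f * g + f * pd i g := by
  classical
  apply MvPowerSeries.ext; intro d
  set e : Fin 2 →₀ ℕ := Finsupp.single i 1 with he
  rw [map_add, coeff_pd, MvPowerSeries.coeff_mul, MvPowerSeries.coeff_mul,
    MvPowerSeries.coeff_mul, Finset.mul_sum]
  have hsplit : ∀ p ∈ Finset.HasAntidiagonal.antidiagonal (d + e),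
      ((d i : ℂ) + 1) * (MvPowerSeries.coeff p.1 f * MvPowerSeries.coeff p.2 g)
        = ((p.1 : Fin 2 →₀ ℕ) i : ℂ) * (MvPowerSeries.coeff p.1 f * MvPowerSeries.coeff p.2 g)
          + ((p.2 : Fin 2 →₀ ℕ) i : ℂ) * (MvPowerSeries.coeff p.1 f * MvPowerSeries.coeff p.2 g) := by
    rintro ⟨p1, p2⟩ hp
    simp only [Finset.HasAntidiagonal.mem_antidiagonal] at hp
    have hnat : p1 i + p2 i = d i + 1 := by
      have := DFunLike.congr_fun hp i
      simpa [he, Finsupp.single_apply] using this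
    have hc : (p1 i : ℂ) + (p2 i : ℂ) = (d i : ℂ) + 1 := by exact_mod_cast hnat
    rw [← hc]; ring
  rw [Finset.sum_congr rfl hsplit, Finset.sum_add_distrib,
    key_reindex1 i d (fun q => MvPowerSeries.coeff q f) (fun q => MvPowerSeries.coeff q g),
    key_reindex2 i d (fun q => MvPowerSeries.coeff q f) (fun q => MvPowerSeries.coeff q g)]
  congr 1
  · refine Finset.sum_congr rfl fun p _ => ?_
    rw [coeff_pd]; ring
  · refine Finset.sum_congr rfl fun p _ => ?_
    rw [coeff_pd]; ring

lemma vf_mul (a b f g : F2) : vf a b (f * g) = vf a b f * g + f * vf a b g := by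
  unfold vf; rw [pd_mul, pd_mul]; ring

lemma vf_add (a b f g : F2) : vf a b (f + g) = vf a b f + vf a b g := by
  unfold vf; rw [pd_add, pd_add]; ring

lemma vf_nsmul (a b : F2) (n : ℕ) (f : F2) : vf a b (n • f) = n • vf a b f := by
  unfold vf; rw [pd_nsmul, pd_nsmul, smul_add, mul_smul_comm, mul_smul_comm]

def vfHom (a b : F2) : F2 →+ F2 := AddMonoidHom.mk' (vf a b) (vf_add a b)

lemma iter_leibniz (a b f g : F2) (n : ℕ) :
    (vf a b)^[n] (f * g)
      = ∑ k ∈ Finset.range (n+1), n.choose k • ((vf a b)^[k] f * (vf a b)^[n-k] g) := by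
  induction n with
  | zero => simp
  | succ n ih =>
    set u : ℕ → F2 := fun k => (vf a b)^[k] f with hu
    set w : ℕ → F2 := fun k => (vf a b)^[k] g with hw
    rw [Function.iterate_succ_apply', ih]
    have hu' : ∀ k, vf a b (u k) = u (k+1) := by
      intro k; rw [hu]; simp [Function.iterate_succ_apply']
    have hw' : ∀ k, vf a b (w k) = w (k+1) := by
      intro k; rw [hw]; simp [Function.iterate_succ_apply']
    have hstep : vf a b (∑ k ∈ Finset.range (n+1), n.choose k • (u k * w (n-k)))
        = ∑ k ∈ Finset.range (n+1), n.choose k • (u (k+1) * w (n-k) + u k * w (n-k+1)) := by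
      rw [show vf a b (∑ k ∈ Finset.range (n+1), n.choose k • (u k * w (n-k)))
          = vfHom a b (∑ k ∈ Finset.range (n+1), n.choose k • (u k * w (n-k))) from rfl,
        map_sum]
      refine Finset.sum_congr rfl fun k _ => ?_
      show vf a b (n.choose k • (u k * w (n-k))) = _
      rw [vf_nsmul, vf_mul, hu', hw']
    rw [hstep]
    have hB : ∑ k ∈ Finset.range (n+1), n.choose k • (u k * w (n-k+1))
        = ∑ k ∈ Finset.range (n+1), n.choose k • (u k * w (n+1-k)) := by
      refine Finset.sum_congr rfl fun k hk => ?_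
      rw [Finset.mem_range] at hk
      have : n - k + 1 = n + 1 - k := by omega
      rw [this]
    simp only [smul_add, Finset.sum_add_distrib]
    rw [hB]
    have hRterm : ∀ j ∈ Finset.range (n+1),
        (n+1).choose (j+1) • (u (j+1) * w (n+1-(j+1)))
          = n.choose j • (u (j+1) * w (n-j)) + n.choose (j+1) • (u (j+1) * w (n-j)) := by
      intro j hj
      have h1 : n + 1 - (j+1) = n - j := by omega
      rw [h1, Nat.choose_succ_succ, add_smul]
    have hA : ∑ k ∈ Finset.range (n+2), (n+1).choose k • (u k * w (n+1-k))
        = (∑ j ∈ Finset.range (n+1), n.choose j • (u (j+1) * w (n-j)))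
          + ((∑ j ∈ Finset.range (n+1), n.choose (j+1) • (u (j+1) * w (n-j))) + u 0 * w (n+1)) := by
      rw [Finset.sum_range_succ' (fun k => (n+1).choose k • (u k * w (n+1-k))) (n+1)]
      simp only [Nat.choose_zero_right, one_smul, Nat.sub_zero]
      rw [Finset.sum_congr rfl hRterm, Finset.sum_add_distrib, add_assoc]
    have hB2 : ∑ k ∈ Finset.range (n+1), n.choose k • (u k * w (n+1-k))
        = (∑ j ∈ Finset.range (n+1), n.choose (j+1) • (u (j+1) * w (n-j))) + u 0 * w (n+1) := by
      rw [Finset.sum_range_succ' (fun k => n.choose k • (u k * w (n+1-k))) n]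
      simp only [Nat.choose_zero_right, one_smul, Nat.sub_zero]
      congr 1
      rw [Finset.sum_range_succ]
      simp only [Nat.choose_succ_self, zero_smul, add_zero]
      refine Finset.sum_congr rfl fun j hj => ?_
      have h1 : n + 1 - (j+1) = n - j := by omega
      rw [h1]
    rw [hA, ← hB2]
end Leibniz

section ExpMul
open MvPowerSeries

lemma expX_coeff_sum (a b : F2) (ha : ordGE a 2) (hb : ordGE b 2) (g : F2)
    (d : Fin 2 →₀ ℕ) (N : ℕ) (hdN : deg d ≤ N) :
    MvPowerSeries.coeff d (expX a b g)
      = ∑ j ∈ Finset.range (N+1),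
          ((j.factorial : ℂ))⁻¹ * MvPowerSeries.coeff d ((vf a b)^[j] g) := by
  show (∑' j : ℕ, ((j.factorial : ℂ))⁻¹ * MvPowerSeries.coeff d ((vf a b)^[j] g)) = _
  refine tsum_eq_sum ?_
  intro j hj
  rw [Finset.mem_range] at hj
  rw [ordGE_iter ha hb g j d (by omega), mul_zero]

lemma triangle (N : ℕ) (F : ℕ → ℕ → ℂ) (hF : ∀ j k, N < j + k → F j k = 0) :
    ∑ n ∈ Finset.range (N+1), ∑ k ∈ Finset.range (n+1), F k (n-k)
      = ∑ j ∈ Finset.range (N+1), ∑ k ∈ Finset.range (N+1), F j k := by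
  classical
  have h1 : ∀ n, ∑ k ∈ Finset.range (n+1), F k (n-k)
      = ∑ p ∈ Finset.HasAntidiagonal.antidiagonal n, F p.1 p.2 :=
    fun n => (Finset.Nat.sum_antidiagonal_eq_sum_range_succ_mk (fun p => F p.1 p.2) n).symm
  simp only [h1]
  have hdisj : (↑(Finset.range (N+1)) : Set ℕ).PairwiseDisjoint Finset.HasAntidiagonal.antidiagonal := by
    intro x _ y _ hxy
    simp only [Function.onFun]
    rw [Finset.disjoint_left]
    intro p hpx hpy
    rw [Finset.HasAntidiagonal.mem_antidiagonal] at hpx hpy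
    exact hxy (hpx ▸ hpy.symm ▸ rfl)
  rw [← Finset.sum_biUnion hdisj]
  have hset : (Finset.range (N+1)).biUnion Finset.HasAntidiagonal.antidiagonal
      = (Finset.range (N+1) ×ˢ Finset.range (N+1)).filter (fun p => p.1 + p.2 ≤ N) := by
    ext p
    simp only [Finset.mem_biUnion, Finset.mem_filter, Finset.mem_product,
      Finset.HasAntidiagonal.mem_antidiagonal, Finset.mem_range]
    constructor
    · rintro ⟨n, hn, hmem⟩
      omega
    · intro h
      exact ⟨p.1 + p.2, by omega, rfl⟩
  rw [hset, ← Finset.sum_product']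
  exact Finset.sum_filter_of_ne (by
    intro p _ hne
    by_contra hcon
    exact hne (hF p.1 p.2 (by omega)))

lemma expX_mul (a b : F2) (ha : ordGE a 2) (hb : ordGE b 2) (f g : F2) :
    expX a b (f * g) = expX a b f * expX a b g := by
  classical
  apply MvPowerSeries.ext; intro d
  set N := deg d with hN
  have hR : MvPowerSeries.coeff d (expX a b f * expX a b g)
      = ∑ j ∈ Finset.range (N+1), ∑ k ∈ Finset.range (N+1),
          ((j.factorial:ℂ))⁻¹ * ((k.factorial:ℂ))⁻¹ *
            MvPowerSeries.coeff d ((vf a b)^[j] f * (vf a b)^[k] g) := by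
    rw [MvPowerSeries.coeff_mul]
    have hterm : ∀ p ∈ Finset.HasAntidiagonal.antidiagonal d,
        MvPowerSeries.coeff p.1 (expX a b f) * MvPowerSeries.coeff p.2 (expX a b g)
          = ∑ j ∈ Finset.range (N+1), ∑ k ∈ Finset.range (N+1),
              ((j.factorial:ℂ))⁻¹ * ((k.factorial:ℂ))⁻¹ *
                (MvPowerSeries.coeff p.1 ((vf a b)^[j] f) *
                  MvPowerSeries.coeff p.2 ((vf a b)^[k] g)) := by
      rintro ⟨p1, p2⟩ hp
      simp only [Finset.HasAntidiagonal.mem_antidiagonal] at hp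
      have hdd : deg p1 + deg p2 = N := by rw [hN, ← hp, deg_add]
      rw [expX_coeff_sum a b ha hb f p1 N (by omega),
        expX_coeff_sum a b ha hb g p2 N (by omega), Finset.sum_mul_sum]
      exact Finset.sum_congr rfl fun j _ => Finset.sum_congr rfl fun k _ => by ring
    rw [Finset.sum_congr rfl hterm, Finset.sum_comm]
    refine Finset.sum_congr rfl fun j _ => ?_
    rw [Finset.sum_comm]
    refine Finset.sum_congr rfl fun k _ => ?_
    rw [MvPowerSeries.coeff_mul, Finset.mul_sum]
  have hL : MvPowerSeries.coeff d (expX a b (f * g))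
      = ∑ n ∈ Finset.range (N+1), ∑ k ∈ Finset.range (n+1),
          ((k.factorial:ℂ))⁻¹ * (((n-k).factorial:ℂ))⁻¹ *
            MvPowerSeries.coeff d ((vf a b)^[k] f * (vf a b)^[n-k] g) := by
    rw [expX_coeff_sum a b ha hb (f*g) d N le_rfl]
    refine Finset.sum_congr rfl fun n _ => ?_
    rw [iter_leibniz, map_sum, Finset.mul_sum]
    refine Finset.sum_congr rfl fun k hk => ?_
    rw [Finset.mem_range] at hk
    have hcc : MvPowerSeries.coeff d (n.choose k • ((vf a b)^[k] f * (vf a b)^[n-k] g))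
        = (n.choose k : ℂ) * MvPowerSeries.coeff d ((vf a b)^[k] f * (vf a b)^[n-k] g) := by
      rw [map_nsmul, nsmul_eq_mul]
    rw [hcc]
    have hfac : (n.choose k : ℂ) * (k.factorial : ℂ) * ((n-k).factorial : ℂ)
        = (n.factorial : ℂ) := by
      exact_mod_cast congrArg (Nat.cast : ℕ → ℂ)
        (Nat.choose_mul_factorial_mul_factorial (by omega : k ≤ n))
    have h1 : (n.factorial : ℂ) ≠ 0 := Nat.cast_ne_zero.mpr n.factorial_ne_zero
    have h2 : (k.factorial : ℂ) ≠ 0 := Nat.cast_ne_zero.mpr k.factorial_ne_zero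
    have h3 : ((n-k).factorial : ℂ) ≠ 0 := Nat.cast_ne_zero.mpr (n-k).factorial_ne_zero
    field_simp
    try linear_combination MvPowerSeries.coeff d ((vf a b)^[k] f * (vf a b)^[n-k] g) * hfac
  rw [hL, hR]
  refine triangle N (fun j k =>
    ((j.factorial:ℂ))⁻¹ * ((k.factorial:ℂ))⁻¹ *
      MvPowerSeries.coeff d ((vf a b)^[j] f * (vf a b)^[k] g)) ?_
  intro j k hjk
  have h0 : MvPowerSeries.coeff d ((vf a b)^[j] f * (vf a b)^[k] g) = 0 :=
    ordGE_mul (ordGE_iter ha hb f j) (ordGE_iter ha hb g k) d (by omega)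
  simp [h0]
end ExpMul

section Blowup
open MvPowerSeries

lemma blowup_apply (f : F2) (d : Fin 2 →₀ ℕ) :
    blowup f d = if d 1 ≤ d 0 then f (idx (d 0 - d 1) (d 1)) else 0 := rfl

lemma blowup_coeff (f : F2) (d : Fin 2 →₀ ℕ) :
    MvPowerSeries.coeff d (blowup f)
      = if d 1 ≤ d 0 then f (idx (d 0 - d 1) (d 1)) else 0 := rfl

lemma blowup_add (f g : F2) : blowup (f + g) = blowup f + blowup g := by
  apply MvPowerSeries.ext; intro d
  rw [map_add, blowup_coeff, blowup_coeff, blowup_coeff]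
  have : (f + g) (idx (d 0 - d 1) (d 1)) = f (idx (d 0 - d 1) (d 1)) + g (idx (d 0 - d 1) (d 1)) := rfl
  split_ifs with h
  · rw [this]
  · rw [add_zero]

lemma blowup_mul (f g : F2) : blowup (f * g) = blowup f * blowup g := by
  classical
  apply MvPowerSeries.ext; intro d
  rw [MvPowerSeries.coeff_mul, blowup_coeff]
  have hterm : ∀ p ∈ Finset.HasAntidiagonal.antidiagonal d,
      MvPowerSeries.coeff p.1 (blowup f) * MvPowerSeries.coeff p.2 (blowup g)
        = if (p.1 : Fin 2 →₀ ℕ) 1 ≤ (p.1 : Fin 2 →₀ ℕ) 0 ∧ (p.2 : Fin 2 →₀ ℕ) 1 ≤ (p.2 : Fin 2 →₀ ℕ) 0 then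
            f (idx ((p.1 : Fin 2 →₀ ℕ) 0 - (p.1 : Fin 2 →₀ ℕ) 1) ((p.1 : Fin 2 →₀ ℕ) 1))
              * g (idx ((p.2 : Fin 2 →₀ ℕ) 0 - (p.2 : Fin 2 →₀ ℕ) 1) ((p.2 : Fin 2 →₀ ℕ) 1))
          else 0 := by
    rintro ⟨p1, p2⟩ _
    rw [blowup_coeff, blowup_coeff]
    by_cases h1 : p1 1 ≤ p1 0 <;> by_cases h2 : p2 1 ≤ p2 0 <;> simp [h1, h2]
  rw [Finset.sum_congr rfl hterm, Finset.sum_ite, Finset.sum_const_zero, add_zero]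
  by_cases hd : d 1 ≤ d 0
  · rw [if_pos hd]
    have hLHS : (f * g) (idx (d 0 - d 1) (d 1))
        = ∑ q ∈ Finset.HasAntidiagonal.antidiagonal (idx (d 0 - d 1) (d 1)),
            MvPowerSeries.coeff q.1 f * MvPowerSeries.coeff q.2 g := by
      rw [show (f * g) (idx (d 0 - d 1) (d 1))
          = MvPowerSeries.coeff (idx (d 0 - d 1) (d 1)) (f * g) from rfl,
        MvPowerSeries.coeff_mul]
    rw [hLHS]
    refine Finset.sum_nbij'
      (fun q => (idx ((q.1 : Fin 2 →₀ ℕ) 0 + (q.1 : Fin 2 →₀ ℕ) 1) ((q.1 : Fin 2 →₀ ℕ) 1),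
                 idx ((q.2 : Fin 2 →₀ ℕ) 0 + (q.2 : Fin 2 →₀ ℕ) 1) ((q.2 : Fin 2 →₀ ℕ) 1)))
      (fun p => (idx ((p.1 : Fin 2 →₀ ℕ) 0 - (p.1 : Fin 2 →₀ ℕ) 1) ((p.1 : Fin 2 →₀ ℕ) 1),
                 idx ((p.2 : Fin 2 →₀ ℕ) 0 - (p.2 : Fin 2 →₀ ℕ) 1) ((p.2 : Fin 2 →₀ ℕ) 1)))
      ?_ ?_ ?_ ?_ ?_
    · rintro ⟨q1, q2⟩ hq
      rw [Finset.HasAntidiagonal.mem_antidiagonal] at hq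
      have e0 : q1 0 + q2 0 = d 0 - d 1 := by
        have := DFunLike.congr_fun hq 0; simpa using this
      have e1 : q1 1 + q2 1 = d 1 := by
        have := DFunLike.congr_fun hq 1; simpa using this
      simp only [Finset.mem_filter, Finset.HasAntidiagonal.mem_antidiagonal, idx_apply0, idx_apply1]
      refine ⟨?_, by omega, by omega⟩
      rw [idx_add]
      have hd0 : idx (q1 0 + q1 1 + (q2 0 + q2 1)) (q1 1 + q2 1) = idx (d 0) (d 1) := by
        rw [idx_eq_iff]; constructor <;> omega
      rw [hd0, ← eq_idx d]
    · rintro ⟨p1, p2⟩ hp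
      simp at hp
      obtain ⟨hsum, h1, h2⟩ := hp
      have h1' : p1 1 ≤ p1 0 := h1
      have h2' : p2 1 ≤ p2 0 := h2
      have e0 : p1 0 + p2 0 = d 0 := by
        have := DFunLike.congr_fun hsum 0; simpa using this
      have e1 : p1 1 + p2 1 = d 1 := by
        have := DFunLike.congr_fun hsum 1; simpa using this
      rw [Finset.HasAntidiagonal.mem_antidiagonal]
      show idx (p1 0 - p1 1) (p1 1) + idx (p2 0 - p2 1) (p2 1) = idx (d 0 - d 1) (d 1)
      rw [idx_add, idx_eq_iff]
      omega
    · rintro ⟨q1, q2⟩ hq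
      rw [Finset.HasAntidiagonal.mem_antidiagonal] at hq
      simp only [idx_apply0, idx_apply1]
      have : ∀ a b : ℕ, idx (a + b - b) b = idx a b := by intro a b; congr 1; omega
      rw [this, this, ← eq_idx q1, ← eq_idx q2]
    · rintro ⟨p1, p2⟩ hp
      simp at hp
      obtain ⟨hsum, h1, h2⟩ := hp
      have h1' : p1 1 ≤ p1 0 := h1
      have h2' : p2 1 ≤ p2 0 := h2
      simp only [idx_apply0, idx_apply1]
      have c1 : p1 0 - p1 1 + p1 1 = p1 0 := by omega
      have c2 : p2 0 - p2 1 + p2 1 = p2 0 := by omega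

      rw [c1, c2, ← eq_idx p1, ← eq_idx p2]
    · rintro ⟨q1, q2⟩ hq
      simp only [idx_apply0, idx_apply1]
      have : ∀ a b : ℕ, idx (a + b - b) b = idx a b := by intro a b; congr 1; omega
      rw [this, this]
      rw [coeffA, coeffA, ← eq_idx q1, ← eq_idx q2]
  · rw [if_neg hd]
    have hempty : ∀ p ∈ Finset.HasAntidiagonal.antidiagonal d,
        ¬((p.1 : Fin 2 →₀ ℕ) 1 ≤ (p.1 : Fin 2 →₀ ℕ) 0 ∧ (p.2 : Fin 2 →₀ ℕ) 1 ≤ (p.2 : Fin 2 →₀ ℕ) 0) := by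
      rintro ⟨p1, p2⟩ hp
      rw [Finset.HasAntidiagonal.mem_antidiagonal] at hp
      have e0 : p1 0 + p2 0 = d 0 := by
        have := DFunLike.congr_fun hp 0; simpa using this
      have e1 : p1 1 + p2 1 = d 1 := by
        have := DFunLike.congr_fun hp 1; simpa using this
      rintro ⟨h1, h2⟩
      have h1' : p1 1 ≤ p1 0 := h1
      have h2' : p2 1 ≤ p2 0 := h2
      omega
    rw [Finset.filter_false_of_mem hempty, Finset.sum_empty]
end Blowup

section Chain
open MvPowerSeries

lemma idx_succ0 (a b : ℕ) : idx a b + Finsupp.single 0 1 = idx (a+1) b := by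
  ext i; fin_cases i <;> simp [Finsupp.add_apply, Finsupp.single_apply]

lemma idx_succ1 (a b : ℕ) : idx a b + Finsupp.single 1 1 = idx a (b+1) := by
  ext i; fin_cases i <;> simp [Finsupp.add_apply, Finsupp.single_apply]

lemma coeff_Xv_mul (h : F2) (d : Fin 2 →₀ ℕ) :
    MvPowerSeries.coeff d (Xv * h)
      = if 1 ≤ d 0 then MvPowerSeries.coeff (d - Finsupp.single 0 1) h else 0 := by
  classical
  rw [show Xv = MvPowerSeries.monomial (Finsupp.single 0 1) 1 from rfl,
    MvPowerSeries.coeff_monomial_mul]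
  simp [Finsupp.single_le_iff]

lemma coeff_Yv_mul (h : F2) (d : Fin 2 →₀ ℕ) :
    MvPowerSeries.coeff d (Yv * h)
      = if 1 ≤ d 1 then MvPowerSeries.coeff (d - Finsupp.single 1 1) h else 0 := by
  classical
  rw [show Yv = MvPowerSeries.monomial (Finsupp.single 1 1) 1 from rfl,
    MvPowerSeries.coeff_monomial_mul]
  simp [Finsupp.single_le_iff]

lemma pd0_at_idx (f : F2) (a b : ℕ) :
    pd 0 f (idx a b) = ((a:ℂ)+1) * f (idx (a+1) b) := by
  rw [pd_apply]; simp [idx_succ0]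

lemma pd1_at_idx (f : F2) (a b : ℕ) :
    pd 1 f (idx a b) = ((b:ℂ)+1) * f (idx a (b+1)) := by
  rw [pd_apply]; simp [idx_succ1]

lemma pd1_blowup (f : F2) : pd 1 (blowup f) = Xv * blowup (pd 1 f) := by
  apply MvPowerSeries.ext; intro d
  rw [coeff_Xv_mul, coeffA, pd_apply, blowup_apply]
  have ha0 : ((d + Finsupp.single 1 1 : Fin 2 →₀ ℕ)) 0 = d 0 := by
    simp [Finsupp.add_apply, Finsupp.single_apply]
  have ha1 : ((d + Finsupp.single 1 1 : Fin 2 →₀ ℕ)) 1 = d 1 + 1 := by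
    simp [Finsupp.add_apply, Finsupp.single_apply]
  rw [ha0, ha1]
  have hb0 : ((d - Finsupp.single 0 1 : Fin 2 →₀ ℕ)) 0 = d 0 - 1 := by
    simp [Finsupp.tsub_apply, Finsupp.single_apply]
  have hb1 : ((d - Finsupp.single 0 1 : Fin 2 →₀ ℕ)) 1 = d 1 := by
    simp [Finsupp.tsub_apply, Finsupp.single_apply]
  rw [blowup_coeff, hb0, hb1]
  by_cases h : d 1 + 1 ≤ d 0
  · rw [if_pos h, if_pos (by omega : (1:ℕ) ≤ d 0), if_pos (by omega : d 1 ≤ d 0 - 1)]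
    rw [pd1_at_idx]
    have hidx : d 0 - (d 1 + 1) = d 0 - 1 - d 1 := by omega
    rw [hidx]
    all_goals ring
  · rw [if_neg h, mul_zero]
    split_ifs with h1 h2
    · omega
    · rfl
    · rfl

lemma pd0_blowup (f : F2) : pd 0 (blowup f) = blowup (pd 0 f) + Yv * blowup (pd 1 f) := by
  apply MvPowerSeries.ext; intro d
  rw [map_add, coeff_Yv_mul, coeffA, pd_apply, blowup_apply]
  have ha0 : ((d + Finsupp.single 0 1 : Fin 2 →₀ ℕ)) 0 = d 0 + 1 := by
    simp [Finsupp.add_apply, Finsupp.single_apply]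
  have ha1 : ((d + Finsupp.single 0 1 : Fin 2 →₀ ℕ)) 1 = d 1 := by
    simp [Finsupp.add_apply, Finsupp.single_apply]
  rw [ha0, ha1]
  have hb0 : ((d - Finsupp.single 1 1 : Fin 2 →₀ ℕ)) 0 = d 0 := by
    simp [Finsupp.tsub_apply, Finsupp.single_apply]
  have hb1 : ((d - Finsupp.single 1 1 : Fin 2 →₀ ℕ)) 1 = d 1 - 1 := by
    simp [Finsupp.tsub_apply, Finsupp.single_apply]
  rw [blowup_coeff, blowup_coeff, hb0, hb1]
  by_cases h1 : d 1 ≤ d 0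
  · by_cases h2 : 1 ≤ d 1
    · rw [if_pos (by omega : d 1 ≤ d 0 + 1), if_pos h1, if_pos h2,
        if_pos (by omega : d 1 - 1 ≤ d 0), pd0_at_idx, pd1_at_idx]
      have e1 : d 0 + 1 - d 1 = d 0 - d 1 + 1 := by omega
      have e2 : d 0 - (d 1 - 1) = d 0 - d 1 + 1 := by omega
      have e3 : d 1 - 1 + 1 = d 1 := by omega
      rw [e1, e2, e3]
      have c1 : ((d 0 - d 1 : ℕ) : ℂ) = (d 0 : ℂ) - (d 1 : ℂ) := by
        push_cast [Nat.cast_sub h1]; ring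
      have c2 : ((d 1 - 1 : ℕ) : ℂ) = (d 1 : ℂ) - 1 := by
        push_cast [Nat.cast_sub h2]; ring
      rw [c1, c2]
      all_goals ring
    · rw [if_pos (by omega : d 1 ≤ d 0 + 1), if_pos h1, if_neg h2, add_zero, pd0_at_idx]
      have e1 : d 0 + 1 - d 1 = d 0 - d 1 + 1 := by omega
      have e2 : d 0 - d 1 = d 0 := by omega
      rw [e1, e2]
      all_goals ring
  · by_cases h2 : d 1 ≤ d 0 + 1
    · rw [if_pos h2, if_neg h1, zero_add, if_pos (by omega : (1:ℕ) ≤ d 1),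
        if_pos (by omega : d 1 - 1 ≤ d 0), pd1_at_idx]
      have e1 : d 0 + 1 - d 1 = 0 := by omega
      have e2 : d 0 - (d 1 - 1) = 0 := by omega
      have e3 : d 1 - 1 + 1 = d 1 := by omega
      rw [e1, e2, e3]
      have c2 : ((d 1 - 1 : ℕ) : ℂ) = (d 0 : ℂ) := by
        have : d 1 - 1 = d 0 := by omega
        rw [this]
      rw [c2]
      all_goals ring
    · rw [if_neg h2, if_neg h1, zero_add, mul_zero]
      split_ifs with h3 h4
      · omega
      · rfl
      · rfl

lemma blowup_Xv : blowup Xv = Xv := by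
  classical
  apply MvPowerSeries.ext; intro d
  rw [blowup_coeff]
  have hX : ∀ e : Fin 2 →₀ ℕ, Xv e = if e 0 = 1 ∧ e 1 = 0 then (1:ℂ) else 0 := by
    intro e
    rw [show Xv e = MvPowerSeries.coeff e Xv from rfl,
      show Xv = MvPowerSeries.X 0 from rfl, MvPowerSeries.coeff_X]
    have hiff : (e = Finsupp.single 0 1) ↔ (e 0 = 1 ∧ e 1 = 0) := by
      constructor
      · intro h; rw [h]; simp [Finsupp.single_apply]
      · rintro ⟨h0, h1⟩
        rw [eq_idx e, h0, h1, single0_eq_idx]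
    simp [hiff]
  rw [show MvPowerSeries.coeff d Xv = Xv d from rfl, hX, hX]
  simp only [idx_apply0, idx_apply1]
  split_ifs <;> first | rfl | omega

lemma blowup_Yv : blowup Yv = Xv * Yv := by
  classical
  apply MvPowerSeries.ext; intro d
  rw [blowup_coeff]
  have hXY : Xv * Yv = MvPowerSeries.monomial (idx 1 1) 1 := by
    rw [show Xv = MvPowerSeries.monomial (Finsupp.single 0 1) 1 from rfl,
      show Yv = MvPowerSeries.monomial (Finsupp.single 1 1) 1 from rfl,
      MvPowerSeries.monomial_mul_monomial, one_mul]
    rfl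
  have hY : ∀ e : Fin 2 →₀ ℕ, Yv e = if e 0 = 0 ∧ e 1 = 1 then (1:ℂ) else 0 := by
    intro e
    rw [show Yv e = MvPowerSeries.coeff e Yv from rfl,
      show Yv = MvPowerSeries.X 1 from rfl, MvPowerSeries.coeff_X]
    have hiff : (e = Finsupp.single 1 1) ↔ (e 0 = 0 ∧ e 1 = 1) := by
      constructor
      · intro h; rw [h]; simp [Finsupp.single_apply]
      · rintro ⟨h0, h1⟩
        rw [eq_idx e, h0, h1, single1_eq_idx]
    simp [hiff]
  rw [hXY, MvPowerSeries.coeff_monomial, hY]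
  have hiff2 : (d = idx 1 1) ↔ (d 0 = 1 ∧ d 1 = 1) := by
    constructor
    · intro h; rw [h]; simp
    · rintro ⟨h0, h1⟩; rw [eq_idx d, h0, h1]
  simp only [idx_apply0, idx_apply1, hiff2]
  split_ifs <;> first | rfl | omega

lemma blowup_vf (a b bt : F2) (hbt : Xv * bt = blowup b - Yv * blowup a) (f : F2) :
    blowup (vf a b f) = vf (blowup a) bt (blowup f) := by
  unfold vf
  rw [blowup_add, blowup_mul, blowup_mul, pd0_blowup, pd1_blowup]
  linear_combination -(blowup (pd 1 f)) * hbt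

lemma blowup_iter (a b bt : F2) (hbt : Xv * bt = blowup b - Yv * blowup a) (g : F2) (j : ℕ) :
    blowup ((vf a b)^[j] g) = (vf (blowup a) bt)^[j] (blowup g) := by
  induction j with
  | zero => rfl
  | succ n ih =>
      rw [Function.iterate_succ_apply', Function.iterate_succ_apply',
        blowup_vf a b bt hbt, ih]

lemma blowup_expX (a b bt : F2) (hbt : Xv * bt = blowup b - Yv * blowup a) (g : F2) :
    blowup (expX a b g) = expX (blowup a) bt (blowup g) := by
  apply MvPowerSeries.ext; intro d
  rw [blowup_coeff]
  show _ = ∑' j : ℕ, ((j.factorial : ℂ))⁻¹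
      * MvPowerSeries.coeff d ((vf (blowup a) bt)^[j] (blowup g))
  by_cases hd : d 1 ≤ d 0
  · rw [if_pos hd]
    rw [show (expX a b g) (idx (d 0 - d 1) (d 1))
        = ∑' j : ℕ, ((j.factorial : ℂ))⁻¹
            * MvPowerSeries.coeff (idx (d 0 - d 1) (d 1)) ((vf a b)^[j] g) from rfl]
    refine tsum_congr fun j => ?_
    rw [← blowup_iter a b bt hbt g j, blowup_coeff, if_pos hd]
    rfl
  · rw [if_neg hd]
    have h0 : ∀ j : ℕ, ((j.factorial : ℂ))⁻¹
        * MvPowerSeries.coeff d ((vf (blowup a) bt)^[j] (blowup g)) = 0 := by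
      intro j
      rw [← blowup_iter a b bt hbt g j, blowup_coeff, if_neg hd, mul_zero]
    rw [tsum_congr h0, tsum_zero]
end Chain

noncomputable section

/-- exp X(y)/exp X(x) = exp X̃(v), i.e. exp X(x)·exp X̃(v) = exp X(xv) (= exp X(y)
pulled back by the chart), where X̃ = a(x,xv) ∂/∂x + ((b(x,xv) - v a(x,xv))/x) ∂/∂v is the
pullback of X, assumed to have coefficients of order ≥ 2 (as happens at a tangent-cone point). -/
theorem second_component_of_lift (a b : F2) (ha : ordGE a 2) (hb : ordGE b 2)
    (bt : F2) (hbt : Xv * bt = blowup b - Yv * blowup a)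
    (hbt2 : ordGE bt 2) (hba : ordGE (blowup a) 2) :
    blowup (expX a b Yv) = blowup (expX a b Xv) * expX (blowup a) bt Yv := by
  rw [blowup_expX a b bt hbt Yv, blowup_expX a b bt hbt Xv, blowup_Yv, blowup_Xv,
    expX_mul (blowup a) bt hba hbt2 Xv Yv]

end

end
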